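/- Let u be a nonempty word, v a word, and e ≥ 0 an integer, and set y = (uv)^e u. Define z₁ = (uv)^{e+1} and z₂ = (uv)^{e+2}, and let c = |z₁|_y and d = |z₂|_y − |z₁|_y. Then c ≥ 1, d ≥ 1, and for every integer i > e one has |(uv)^i|_y = (i−e)·d + c − d. -/

import Mathlib

/-- Number of (possibly overlapping) occurrences of `x` as a contiguous
subword (factor) of `z`. -/
def occCount {α : Type*} [DecidableEq α] (x z : List α) : ℕ :=
  ((List.range (z.length + 1)).filter (fun i => decide (x <+: z.drop i))).length

/-- `wpow w n` is the word `w` concatenated with itself `n` times. -/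
def wpow {α : Type*} (w : List α) (n : ℕ) : List α := (List.replicate n w).flatten

/-- `z` is `y`-bordered: `z ≠ y` and `y` is both a prefix and a suffix of `z`. -/
def IsBordered {α : Type*} (y z : List α) : Prop := z ≠ y ∧ y <+: z ∧ y <:+ z

/-- `x` is interlaced by `y`: `y` is a subword (factor) of every `x`-bordered word. -/
def InterlacedBy {α : Type*} (x y : List α) : Prop :=
  ∀ z : List α, IsBordered x z → y <:+: z

section aux
variable {α : Type*} [DecidableEq α]

lemma wpow_length (w : List α) (n : ℕ) : (wpow w n).length = n * w.length := by
  simp [wpow]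

lemma wpow_add (w : List α) (m n : ℕ) : wpow w (m + n) = wpow w m ++ wpow w n := by
  unfold wpow
  rw [List.replicate_add, List.flatten_append]

lemma wpow_one (w : List α) : wpow w 1 = w := by
  simp [wpow]

lemma wpow_succ (w : List α) (n : ℕ) : wpow w (n + 1) = w ++ wpow w n := by
  rw [add_comm, wpow_add, wpow_one]

lemma prefix_append_iff_of_le {x a b : List α} (h : x.length ≤ a.length) :
    x <+: a ++ b ↔ x <+: a := by
  constructor
  · intro hp
    rw [List.prefix_iff_eq_take] at hp ⊢
    rwa [List.take_append_of_le_length h] at hp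
  · exact fun hp => hp.trans (a.prefix_append b)

/-- stabilization: prefix at position j of w^m depends only on j once there is room -/
lemma prefix_drop_wpow_iff {x w : List α} {j m m' : ℕ}
    (hm : j + x.length ≤ m * w.length) (hm' : j + x.length ≤ m' * w.length) :
    x <+: (wpow w m).drop j ↔ x <+: (wpow w m').drop j := by
  wlog hle : m ≤ m' generalizing m m'
  · exact (this hm' hm (le_of_not_ge hle)).symm
  obtain ⟨k, rfl⟩ := Nat.exists_eq_add_of_le hle
  rw [wpow_add, List.drop_append_of_le_length
      (by rw [wpow_length]; omega)]
  rw [prefix_append_iff_of_le]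
  rw [List.length_drop, wpow_length]; omega

lemma occCount_append (x a b : List α) :
    occCount x (a ++ b) =
      ((List.range a.length).filter (fun j => decide (x <+: (a ++ b).drop j))).length
        + occCount x b := by
  unfold occCount
  rw [List.length_append, Nat.add_assoc, List.range_add, List.filter_append,
    List.length_append, List.filter_map, List.length_map]
  congr 2
  apply List.filter_congr
  intro j hj
  simp only [Function.comp_apply, List.drop_append]
  rw [List.drop_eq_nil_of_le (by omega), List.nil_append, Nat.add_sub_cancel_left]

lemma one_le_occCount {x z : List α} (h : x <+: z) : 1 ≤ occCount x z := by
  unfold occCount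
  rw [Nat.one_le_iff_ne_zero, ne_eq, List.length_eq_zero_iff, List.filter_eq_nil_iff]
  push_neg
  exact ⟨0, by simp, by simpa using h⟩

end aux

theorem stmt_2 {α : Type} [DecidableEq α] (u v : List α) (hu : u ≠ []) (e : ℕ)
    (y z₁ z₂ : List α) (hy : y = wpow (u ++ v) e ++ u)
    (hz₁ : z₁ = wpow (u ++ v) (e + 1)) (hz₂ : z₂ = wpow (u ++ v) (e + 2))
    (c d : ℤ) (hc : c = occCount y z₁)
    (hd : d = (occCount y z₂ : ℤ) - (occCount y z₁ : ℤ)) :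
    1 ≤ c ∧ 1 ≤ d ∧
      ∀ i : ℕ, e < i →
        (occCount y (wpow (u ++ v) i) : ℤ) = ((i : ℤ) - (e : ℤ)) * d + c - d := by
  set w := u ++ v with hw
  have hp : 0 < w.length := by
    rw [hw, List.length_append]
    have := List.length_pos_iff.mpr hu
    omega
  have hyu : u.length ≤ w.length := by rw [hw, List.length_append]; omega
  have hylen : y.length = e * w.length + u.length := by
    rw [hy, List.length_append, wpow_length]
  -- y is a prefix of w^m for m ≥ e+1
  have hypre : ∀ m : ℕ, e + 1 ≤ m → y <+: wpow w m := by
    intro m hm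
    obtain ⟨k, rfl⟩ := Nat.exists_eq_add_of_le hm
    rw [show e + 1 + k = e + (1 + k) by ring, wpow_add, hy]
    apply (List.prefix_append_right_inj (wpow w e)).mpr
    rw [wpow_add, wpow_one]
    have h1 : u <+: w := by rw [hw]; exact List.prefix_append u v
    exact h1.trans (List.prefix_append w (wpow w k))
  -- the stable per-period count
  set s : ℕ := ((List.range w.length).filter
      (fun j => decide (y <+: (wpow w (e + 2)).drop j))).length with hs
  -- step lemma
  have hstep : ∀ i : ℕ, e + 1 ≤ i →
      occCount y (wpow w (i + 1)) = s + occCount y (wpow w i) := by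
    intro i hi
    rw [wpow_succ, occCount_append]
    congr 1
    rw [hs]
    congr 1
    apply List.filter_congr
    intro j hj
    rw [List.mem_range] at hj
    rw [← wpow_succ]
    simp only [decide_eq_decide]
    exact prefix_drop_wpow_iff
      (by rw [hylen]; nlinarith)
      (by rw [hylen]; nlinarith)
  have hc1 : 1 ≤ c := by
    rw [hc]
    exact_mod_cast one_le_occCount (hz₁ ▸ hypre (e + 1) le_rfl)
  have hs1 : 1 ≤ s := by
    rw [hs, Nat.one_le_iff_ne_zero, ne_eq, List.length_eq_zero_iff, List.filter_eq_nil_iff]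
    push_neg
    refine ⟨0, List.mem_range.mpr hp, by simpa using hypre (e + 2) (by omega)⟩
  have hds : d = s := by
    rw [hd, hz₂, hz₁]
    have := hstep (e + 1) le_rfl
    rw [show e + 1 + 1 = e + 2 from rfl] at this
    rw [this]
    push_cast
    ring
  refine ⟨hc1, by rw [hds]; exact_mod_cast hs1, ?_⟩
  intro i hi
  induction i, hi using Nat.le_induction with
  | base =>
    rw [← hz₁, ← hc]
    push_cast
    ring
  | succ n hn ih =>
    rw [hstep n hn]
    push_cast
    rw [ih, hds]
    push_cast
    ring
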